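/- The calculi NMVL_R^sd and NMVL_R are deductively equivalent: Σ ⊢_{NMVL_R^sd} S iff Σ ⊢_{NMVL_R} S, for every set of sequents Σ and sequent S. -/
import Mathlib


/-- Formulas over a set `C` of connectives (applied to lists of arguments). -/
inductive Fm (C : Type) : Type
  | atom : ℕ → Fm C
  | app : C → List (Fm C) → Fm C

noncomputable instance {C : Type} : DecidableEq (Fm C) := Classical.decEq _

/-- A sequent of finite sets of labelled formulas. -/
structure Sequent (C : Type) [DecidableEq C] (n : ℕ) where
  ant : Finset (Fm C × Fin n)
  suc : Finset (Fm C × Fin n)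

variable {C : Type} [DecidableEq C] {n : ℕ}

/-- A valuation legal w.r.t. the non-deterministic tables `tbl`. -/
def IsVal (tbl : C → List (Fin n) → Finset (Fin n)) (v : Fm C → Fin n) : Prop :=
  ∀ c args, v (Fm.app c args) ∈ tbl c (args.map v)

/-- A valuation satisfies a sequent. -/
def Sat (v : Fm C → Fin n) (S : Sequent C n) : Prop :=
  (∀ p ∈ S.ant, v p.1 = p.2) → ∃ p ∈ S.suc, v p.1 = p.2

/-- Semantic entailment. -/
def Entails (tbl : C → List (Fin n) → Finset (Fin n)) (H : Set (Sequent C n)) (S : Sequent C n) : Prop :=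
  ∀ v : Fm C → Fin n, IsVal tbl v → (∀ T ∈ H, Sat v T) → Sat v S

/-- The family (∗(φ₁,…,φ_ℓ)×k)⁻¹ of antecedent sets. -/
def Theta (tbl : C → List (Fin n) → Finset (Fin n)) (c : C) (args : List (Fm C)) (k : Fin n) :
    Set (Finset (Fm C × Fin n)) :=
  { Θ | ∃ ks : List (Fin n), ks.length = args.length ∧ k ∈ tbl c ks ∧ Θ = (args.zip ks).toFinset }

/-- Λ ∈ ⋁(∗(φ₁,…,φ_ℓ)×k)⁻¹ : a choice set hitting each Θ_q and contained in their union. -/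
def Choice (tbl : C → List (Fin n) → Finset (Fin n)) (c : C) (args : List (Fm C)) (k : Fin n)
    (Λ : Finset (Fm C × Fin n)) : Prop :=
  (∀ Θ ∈ Theta tbl c args k, ∃ x ∈ Θ, x ∈ Λ) ∧
  (∀ x ∈ Λ, ∃ Θ ∈ Theta tbl c args k, x ∈ Θ)

/-- Which optional axioms/rules a calculus has. -/
structure Rules where
  tableAx : Bool      -- table axioms (2)
  tableRuleS : Bool   -- succedent table rules (10)
  dualAx : Bool       -- distributively dual axioms (13)
  anteRule : Bool     -- antecedent introduction rules (17)
  multiShift : Bool   -- K-L-multi-shift (16)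
  cut : Bool
  res : Bool

/-- Derivability from hypothesis sequents `H`; axioms (ψ,k)→(ψ,k), L-shift, R-shift and
weakenings are always present, the other axioms/rules are governed by `R`. -/
inductive Deriv (R : Rules) (tbl : C → List (Fin n) → Finset (Fin n)) (H : Set (Sequent C n)) :
    Sequent C n → Prop
  | hyp {S} : S ∈ H → Deriv R tbl H S
  | ax (ψ : Fm C) (k : Fin n) : Deriv R tbl H ⟨{(ψ, k)}, {(ψ, k)}⟩
  | tableAx (c : C) (args : List (Fm C)) (ks : List (Fin n))
      (hlen : ks.length = args.length) (h : R.tableAx = true) :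
      Deriv R tbl H ⟨(args.zip ks).toFinset, (tbl c ks).image (fun k => (Fm.app c args, k))⟩
  | lshift {Γ Δ} (φ : Fm C) (k : Fin n) :
      Deriv R tbl H ⟨insert (φ, k) Γ, Δ⟩ →
      Deriv R tbl H ⟨Γ, Δ ∪ ({k}ᶜ : Finset (Fin n)).image (fun k' => (φ, k'))⟩
  | rshift {Γ Δ} (φ : Fm C) {k' k'' : Fin n} (h : k' ≠ k'') :
      Deriv R tbl H ⟨Γ, insert (φ, k') Δ⟩ → Deriv R tbl H ⟨insert (φ, k'') Γ, Δ⟩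
  | lweak {Γ Δ} (φ : Fm C) (k : Fin n) :
      Deriv R tbl H ⟨Γ, Δ⟩ → Deriv R tbl H ⟨insert (φ, k) Γ, Δ⟩
  | rweak {Γ Δ} (φ : Fm C) (k : Fin n) :
      Deriv R tbl H ⟨Γ, Δ⟩ → Deriv R tbl H ⟨Γ, insert (φ, k) Δ⟩
  | cut {Γ Δ} (φ : Fm C) (k : Fin n) (h : R.cut = true) :
      Deriv R tbl H ⟨Γ, insert (φ, k) Δ⟩ → Deriv R tbl H ⟨insert (φ, k) Γ, Δ⟩ →
      Deriv R tbl H ⟨Γ, Δ⟩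
  | res {Γ Δ' Δ''} (φ : Fm C) {k' k'' : Fin n} (h : R.res = true) (hk : k' ≠ k'') :
      Deriv R tbl H ⟨Γ, insert (φ, k') Δ'⟩ → Deriv R tbl H ⟨Γ, insert (φ, k'') Δ''⟩ →
      Deriv R tbl H ⟨Γ, Δ' ∪ Δ''⟩
  | tableRuleS {Γ Δ} (c : C) (args : List (Fm C)) (ks : List (Fin n))
      (hlen : ks.length = args.length) (h : R.tableRuleS = true)
      (prem : ∀ p ∈ args.zip ks, Deriv R tbl H ⟨Γ, insert p Δ⟩) :
      Deriv R tbl H ⟨Γ, Δ ∪ (tbl c ks).image (fun k => (Fm.app c args, k))⟩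
  | dualAx (c : C) (args : List (Fm C)) (k : Fin n) (Λ : Finset (Fm C × Fin n))
      (h : R.dualAx = true) (hΛ : Choice tbl c args k Λ) :
      Deriv R tbl H ⟨{(Fm.app c args, k)}, Λ⟩
  | anteRule {Γ Δ} (c : C) (args : List (Fm C)) (k : Fin n) (h : R.anteRule = true)
      (prem : ∀ ks : List (Fin n), ks.length = args.length → k ∈ tbl c ks →
        Deriv R tbl H ⟨Γ ∪ (args.zip ks).toFinset, Δ⟩) :
      Deriv R tbl H ⟨insert (Fm.app c args, k) Γ, Δ⟩
  | multiShift {Γ Δ} (φ : Fm C) (K : Finset (Fin n)) (h : R.multiShift = true)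
      (hK : K ≠ Finset.univ)
      (prem : ∀ k ∈ K, Deriv R tbl H ⟨insert (φ, k) Γ, Δ⟩) :
      Deriv R tbl H ⟨Γ, Δ ∪ Kᶜ.image (fun k' => (φ, k'))⟩

/-- NMVL_A : table axioms, cut and resolution. -/
def NMVL_A : Rules := ⟨true, false, false, false, false, true, true⟩
/-- NMVL_A with cut but without resolution. -/
def NMVL_A_cut : Rules := ⟨true, false, false, false, false, true, false⟩
/-- NMVL_A with resolution but without cut. -/
def NMVL_A_res : Rules := ⟨true, false, false, false, false, false, true⟩
/-- NMVL_R : succedent table rules, cut and resolution. -/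
def NMVL_R : Rules := ⟨false, true, false, false, false, true, true⟩
/-- NMVL_R without cut and resolution. -/
def NMVL_R_cf : Rules := ⟨false, true, false, false, false, false, false⟩
/-- NMVL_A^dd : distributively dual axioms, cut and resolution. -/
def NMVL_Add : Rules := ⟨false, false, true, false, false, true, true⟩
/-- NMVL_R^sd : antecedent table rules, multi-shift, cut and resolution. -/
def NMVL_Rsd : Rules := ⟨false, false, false, true, true, true, true⟩

section Aux

variable {R : Rules} {tbl : C → List (Fin n) → Finset (Fin n)} {H : Set (Sequent C n)}

/-- Weakening for sets. -/
lemma Deriv.weaken {Γ Δ Γ' Δ' : Finset (Fm C × Fin n)} (h : Deriv R tbl H ⟨Γ, Δ⟩)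
    (hΓ : Γ ⊆ Γ') (hΔ : Δ ⊆ Δ') : Deriv R tbl H ⟨Γ', Δ'⟩ := by
  have keyL : ∀ (E : Finset (Fm C × Fin n)) (Γ₀ Δ₀ : Finset (Fm C × Fin n)),
      Deriv R tbl H ⟨Γ₀, Δ₀⟩ → Deriv R tbl H ⟨Γ₀ ∪ E, Δ₀⟩ := by
    intro E
    induction E using Finset.induction_on with
    | empty => intro Γ₀ Δ₀ h; simpa using h
    | @insert a s ha ih =>
      intro Γ₀ Δ₀ h
      rw [Finset.union_insert]
      exact Deriv.lweak a.1 a.2 (by simpa using ih Γ₀ Δ₀ h)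
  have keyR : ∀ (E : Finset (Fm C × Fin n)) (Γ₀ Δ₀ : Finset (Fm C × Fin n)),
      Deriv R tbl H ⟨Γ₀, Δ₀⟩ → Deriv R tbl H ⟨Γ₀, Δ₀ ∪ E⟩ := by
    intro E
    induction E using Finset.induction_on with
    | empty => intro Γ₀ Δ₀ h; simpa using h
    | @insert a s ha ih =>
      intro Γ₀ Δ₀ h
      rw [Finset.union_insert]
      exact Deriv.rweak a.1 a.2 (by simpa using ih Γ₀ Δ₀ h)
  have h1 := keyR Δ' Γ Δ h
  rw [Finset.union_eq_right.mpr hΔ] at h1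
  have h2 := keyL Γ' Γ Δ' h1
  rwa [Finset.union_eq_right.mpr hΓ] at h2

/-- The sequent `→ {φ}×univ` is derivable. -/
lemma univSuc (hn : 0 < n) (φ : Fm C) :
    Deriv R tbl H ⟨∅, Finset.univ.image (fun k => (φ, k))⟩ := by
  let k₀ : Fin n := ⟨0, hn⟩
  have hax : Deriv R tbl H ⟨insert (φ, k₀) ∅, {(φ, k₀)}⟩ := by
    simpa using Deriv.ax (R := R) (tbl := tbl) (H := H) φ k₀
  have h := Deriv.lshift φ k₀ hax
  have e : ({(φ, k₀)} : Finset (Fm C × Fin n)) ∪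
      ({k₀}ᶜ : Finset (Fin n)).image (fun k' => (φ, k')) =
      Finset.univ.image (fun k => (φ, k)) := by
    rw [show ({(φ, k₀)} : Finset (Fm C × Fin n)) =
        ({k₀} : Finset (Fin n)).image (fun k => (φ, k)) by simp,
      ← Finset.image_union, Finset.union_compl]
  rwa [e] at h

/-- Multi-shift (with no restriction on `K`) is derivable using cut. -/
lemma cutMulti (hn : 0 < n) (hcut : R.cut = true) (φ : Fm C)
    {Γ Δ : Finset (Fm C × Fin n)} (K : Finset (Fin n))
    (prem : ∀ k ∈ K, Deriv R tbl H ⟨insert (φ, k) Γ, Δ⟩) :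
    Deriv R tbl H ⟨Γ, Δ ∪ Kᶜ.image (fun k' => (φ, k'))⟩ := by
  have key : ∀ K', K' ⊆ K →
      Deriv R tbl H ⟨Γ, Δ ∪ (Kᶜ ∪ (K \ K')).image (fun k' => (φ, k'))⟩ := by
    intro K'
    induction K' using Finset.induction_on with
    | empty =>
      intro _
      refine Deriv.weaken (univSuc hn φ) (Finset.empty_subset _) ?_
      intro x hx
      simp only [Finset.mem_union]
      right
      simp only [Finset.mem_image] at hx ⊢
      obtain ⟨k, _, rfl⟩ := hx
      exact ⟨k, by simp; tauto, rfl⟩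
    | @insert a s ha ih =>
      intro hsub
      have haK : a ∈ K := hsub (Finset.mem_insert_self a s)
      have hs : s ⊆ K := fun x hx => hsub (Finset.mem_insert_of_mem hx)
      have hprev := ih hs
      have e : (Kᶜ ∪ (K \ s)) = insert a (Kᶜ ∪ (K \ insert a s)) := by
        ext x
        simp only [Finset.mem_union, Finset.mem_compl, Finset.mem_sdiff,
          Finset.mem_insert]
        constructor
        · rintro (hx | ⟨hx, hxs⟩)
          · exact Or.inr (Or.inl hx)
          · by_cases hxa : x = a
            · exact Or.inl hxa
            · exact Or.inr (Or.inr ⟨hx, fun h => (h.elim hxa hxs)⟩)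
        · rintro (rfl | hx | ⟨hx, hxs⟩)
          · exact Or.inr ⟨haK, ha⟩
          · exact Or.inl hx
          · exact Or.inr ⟨hx, fun h => hxs (Or.inr h)⟩
      rw [e, Finset.image_insert, Finset.union_insert] at hprev
      have hr : Deriv R tbl H ⟨insert (φ, a) Γ,
          Δ ∪ (Kᶜ ∪ (K \ insert a s)).image (fun k' => (φ, k'))⟩ :=
        Deriv.weaken (prem a haK) (le_refl _) Finset.subset_union_left
      exact Deriv.cut φ a hcut hprev hr
  have := key K (le_refl _)
  simpa using this

/-- Repeated R-shift over a set of labels not containing `k`. -/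
lemma rshiftSet (φ : Fm C) {k : Fin n} :
    ∀ (T : Finset (Fin n)) (Γ Δ : Finset (Fm C × Fin n)), k ∉ T →
      Deriv R tbl H ⟨Γ, Δ ∪ T.image (fun k' => (φ, k'))⟩ →
      Deriv R tbl H ⟨insert (φ, k) Γ, Δ⟩ := by
  intro T
  induction T using Finset.induction_on with
  | empty =>
    intro Γ Δ _ h
    exact Deriv.lweak φ k (by simpa using h)
  | @insert a s ha ih =>
    intro Γ Δ hk h
    rw [Finset.image_insert, Finset.union_insert] at h
    have hak : a ≠ k := fun e => hk (e ▸ Finset.mem_insert_self a s)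
    have h2 := Deriv.rshift φ hak h
    have h3 := ih (insert (φ, k) Γ) Δ (fun hks => hk (Finset.mem_insert_of_mem hks)) h2
    simpa using h3

/-- Case analysis over all labelings of a list of formulas is admissible with cut. -/
lemma caseSplit (hn : 0 < n) (hcut : R.cut = true) :
    ∀ (rest : List (Fm C)) (Γ Δ : Finset (Fm C × Fin n)),
      (∀ ks : List (Fin n), ks.length = rest.length →
        Deriv R tbl H ⟨Γ ∪ (rest.zip ks).toFinset, Δ⟩) →
      Deriv R tbl H ⟨Γ, Δ⟩ := by
  intro rest
  induction rest with
  | nil =>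
    intro Γ Δ h
    simpa using h [] rfl
  | cons ψ rest ih =>
    intro Γ Δ h
    have step : ∀ k : Fin n, Deriv R tbl H ⟨insert (ψ, k) Γ, Δ⟩ := by
      intro k
      apply ih (insert (ψ, k) Γ) Δ
      intro ks hks
      have h2 := h (k :: ks) (by simp [hks])
      have e : Γ ∪ ((ψ :: rest).zip (k :: ks)).toFinset =
          insert (ψ, k) Γ ∪ (rest.zip ks).toFinset := by
        rw [List.zip_cons_cons, List.toFinset_cons, Finset.union_insert,
          Finset.insert_union]
      rwa [e] at h2
    have := cutMulti hn hcut ψ Finset.univ (fun k _ => step k)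
    simpa using this

/-- The antecedent introduction rule is admissible in a calculus with succedent
table rules and cut. -/
lemma anteAdm (hn : 0 < n) (hcut : R.cut = true) (hts : R.tableRuleS = true)
    {Γ Δ : Finset (Fm C × Fin n)} (c : C) (args : List (Fm C)) (k : Fin n)
    (prem : ∀ ks : List (Fin n), ks.length = args.length → k ∈ tbl c ks →
      Deriv R tbl H ⟨Γ ∪ (args.zip ks).toFinset, Δ⟩) :
    Deriv R tbl H ⟨insert (Fm.app c args, k) Γ, Δ⟩ := by
  apply caseSplit hn hcut args
  intro ks hks
  by_cases hk : k ∈ tbl c ks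
  · exact Deriv.weaken (prem ks hks hk)
      (Finset.union_subset_union (Finset.subset_insert _ _) (le_refl _)) (le_refl _)
  · have base : ∀ p ∈ args.zip ks,
        Deriv R tbl H ⟨Γ ∪ (args.zip ks).toFinset, insert p Δ⟩ := by
      intro p hp
      have := Deriv.ax (R := R) (tbl := tbl) (H := H) p.1 p.2
      exact Deriv.weaken this
        (by
          intro x hx
          simp only [Finset.mem_singleton] at hx
          subst hx
          exact Finset.mem_union_right _ (by simpa using hp))
        (by
          intro x hx
          simp only [Finset.mem_singleton] at hx
          subst hx
          exact Finset.mem_insert_self _ _)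
    have h1 := Deriv.tableRuleS c args ks hks hts base
    have h2 := rshiftSet (Fm.app c args) (tbl c ks) (Γ ∪ (args.zip ks).toFinset) Δ hk h1
    rw [Finset.insert_union]
    exact h2

lemma exists_idx_ne {α : Type*} {l₁ l₂ : List α} (hlen : l₁.length = l₂.length)
    (hne : l₁ ≠ l₂) :
    ∃ j, ∃ (h₁ : j < l₁.length) (h₂ : j < l₂.length), l₁[j] ≠ l₂[j] := by
  by_contra h
  push_neg at h
  exact hne (List.ext_getElem hlen (fun i h1 h2 => h i h1 h2))

/-- The succedent table rule is admissible in a calculus with antecedent rules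
and multi-shift. -/
lemma tableSAdm (hante : R.anteRule = true) (hms : R.multiShift = true)
    (htbl : ∀ c ks, (tbl c ks).Nonempty)
    {Γ Δ : Finset (Fm C × Fin n)} (c : C) (args : List (Fm C)) (ks : List (Fin n))
    (hlen : ks.length = args.length)
    (prem : ∀ p ∈ args.zip ks, Deriv R tbl H ⟨Γ, insert p Δ⟩) :
    Deriv R tbl H ⟨Γ, Δ ∪ (tbl c ks).image (fun k => (Fm.app c args, k))⟩ := by
  have hK : ((tbl c ks)ᶜ : Finset (Fin n)) ≠ Finset.univ := by
    intro h
    obtain ⟨k, hk⟩ := htbl c ks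
    have : k ∈ ((tbl c ks)ᶜ : Finset (Fin n)) := h ▸ Finset.mem_univ k
    exact (Finset.mem_compl.mp this) hk
  have main := Deriv.multiShift (tbl := tbl) (H := H) (Γ := Γ) (Δ := Δ) (Fm.app c args) ((tbl c ks)ᶜ) hms hK ?_
  · simpa using main
  intro k' hk'
  apply Deriv.anteRule c args k' hante
  intro ks' hlen' hk'mem
  have hne : ks' ≠ ks := by
    rintro rfl
    exact (Finset.mem_compl.mp hk') hk'mem
  obtain ⟨j, h₁, h₂, hj⟩ := exists_idx_ne (hlen'.trans hlen.symm) hne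
  have hja : j < args.length := hlen' ▸ h₁
  have hzlen : j < (args.zip ks).length := by
    rw [List.length_zip]
    exact lt_min hja h₂
  have hp : (args[j], ks[j]) ∈ args.zip ks := by
    have : (args.zip ks)[j] = (args[j], ks[j]) := List.getElem_zip
    exact this ▸ List.getElem_mem hzlen
  have hprem := prem _ hp
  have hr := Deriv.rshift (k' := ks[j]) (k'' := ks'[j]) args[j] (Ne.symm hj) hprem
  refine Deriv.weaken hr ?_ (le_refl _)
  intro x hx
  rcases Finset.mem_insert.mp hx with rfl | hx
  · refine Finset.mem_union_right _ ?_
    rw [List.mem_toFinset]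
    have hzlen' : j < (args.zip ks').length := by
      rw [List.length_zip]
      exact lt_min hja h₁
    have : (args.zip ks')[j] = (args[j], ks'[j]) := List.getElem_zip
    exact this ▸ List.getElem_mem hzlen'
  · exact Finset.mem_union_left _ hx

end Aux

/-- NMVL_R^sd and NMVL_R are deductively equivalent. -/
theorem stmt15 (hn : 2 ≤ n) (tbl : C → List (Fin n) → Finset (Fin n))
    (htbl : ∀ c ks, (tbl c ks).Nonempty) (H : Set (Sequent C n)) (S : Sequent C n) :
    Deriv NMVL_Rsd tbl H S ↔ Deriv NMVL_R tbl H S := by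
  have hn0 : 0 < n := lt_of_lt_of_le (by norm_num) hn
  constructor
  · intro h
    induction h with
    | hyp h => exact Deriv.hyp h
    | ax ψ k => exact Deriv.ax ψ k
    | tableAx c args ks hlen h => exact absurd h (by simp [NMVL_Rsd])
    | lshift φ k _ ih => exact Deriv.lshift φ k ih
    | rshift φ hne _ ih => exact Deriv.rshift φ hne ih
    | lweak φ k _ ih => exact Deriv.lweak φ k ih
    | rweak φ k _ ih => exact Deriv.rweak φ k ih
    | cut φ k hfl _ _ ih1 ih2 => exact Deriv.cut φ k rfl ih1 ih2
    | res φ hfl hk _ _ ih1 ih2 => exact Deriv.res φ rfl hk ih1 ih2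
    | tableRuleS c args ks hlen hfl prem ih => exact absurd hfl (by simp [NMVL_Rsd])
    | dualAx c args k Λ hfl hΛ => exact absurd hfl (by simp [NMVL_Rsd])
    | anteRule c args k hfl prem ih =>
        exact anteAdm hn0 rfl rfl c args k (fun ks h1 h2 => ih ks h1 h2)
    | multiShift φ K hfl hK prem ih => exact cutMulti hn0 rfl φ K (fun k hk => ih k hk)
  · intro h
    induction h with
    | hyp h => exact Deriv.hyp h
    | ax ψ k => exact Deriv.ax ψ k
    | tableAx c args ks hlen h => exact absurd h (by simp [NMVL_R])
    | lshift φ k _ ih => exact Deriv.lshift φ k ih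
    | rshift φ hne _ ih => exact Deriv.rshift φ hne ih
    | lweak φ k _ ih => exact Deriv.lweak φ k ih
    | rweak φ k _ ih => exact Deriv.rweak φ k ih
    | cut φ k hfl _ _ ih1 ih2 => exact Deriv.cut φ k rfl ih1 ih2
    | res φ hfl hk _ _ ih1 ih2 => exact Deriv.res φ rfl hk ih1 ih2
    | tableRuleS c args ks hlen hfl prem ih =>
        exact tableSAdm rfl rfl htbl c args ks hlen (fun p hp => ih p hp)
    | dualAx c args k Λ hfl hΛ => exact absurd hfl (by simp [NMVL_R])
    | anteRule c args k hfl prem ih => exact absurd hfl (by simp [NMVL_R])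
    | multiShift φ K hfl hK prem ih => exact absurd hfl (by simp [NMVL_R])
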